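/- Let Y be a real N×n matrix with YᵀY = Iₙ, let Δ be in the tangent space T_Y St (i.e. YᵀΔ + ΔᵀY = 0), and let t ∈ ℝ. Then the geodesic curve γ(t) = exp(t·Ω(Y,Δ))·Y remains on the Stiefel manifold: γ(t)ᵀγ(t) = Iₙ. -/

import Mathlib

open Matrix

/-- The geodesic `γ(t) = exp(t·Ω(Y,Δ))·Y` stays on the Stiefel manifold:
`γ(t)ᵀγ(t) = Iₙ`, where `Ω(Y,Δ) = (I − ½YYᵀ)ΔYᵀ − YΔᵀ(I − ½YYᵀ)`. -/
theorem geodesic_stays_on_stiefel (N n : ℕ) (Y Δ : Matrix (Fin N) (Fin n) ℝ)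
    (hY : Yᵀ * Y = 1) (hΔ : Yᵀ * Δ + Δᵀ * Y = 0) (t : ℝ) :
    (NormedSpace.exp
        (t • ((1 - (2 : ℝ)⁻¹ • (Y * Yᵀ)) * Δ * Yᵀ
          - Y * Δᵀ * (1 - (2 : ℝ)⁻¹ • (Y * Yᵀ)))) * Y)ᵀ *
      (NormedSpace.exp
        (t • ((1 - (2 : ℝ)⁻¹ • (Y * Yᵀ)) * Δ * Yᵀ
          - Y * Δᵀ * (1 - (2 : ℝ)⁻¹ • (Y * Yᵀ)))) * Y) = 1 := by
  set Ω : Matrix (Fin N) (Fin N) ℝ :=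
    (1 - (2 : ℝ)⁻¹ • (Y * Yᵀ)) * Δ * Yᵀ - Y * Δᵀ * (1 - (2 : ℝ)⁻¹ • (Y * Yᵀ)) with hΩ
  have hA : (1 - (2 : ℝ)⁻¹ • (Y * Yᵀ))ᵀ = 1 - (2 : ℝ)⁻¹ • (Y * Yᵀ) := by
    simp [transpose_sub, transpose_smul, transpose_mul, transpose_transpose]
  have hneg : Ωᵀ = -Ω := by
    simp only [hΩ, transpose_sub, transpose_mul, transpose_transpose, hA, neg_sub]
    rw [Matrix.mul_assoc Y Δᵀ, Matrix.mul_assoc (1 - (2 : ℝ)⁻¹ • (Y * Yᵀ)) Δ]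
  have hskew : (t • Ω)ᵀ = -(t • Ω) := by
    rw [transpose_smul, hneg, smul_neg]
  have key : (NormedSpace.exp (t • Ω))ᵀ * NormedSpace.exp (t • Ω) = 1 := by
    rw [← Matrix.exp_transpose, hskew,
      ← Matrix.exp_add_of_commute (-(t • Ω)) (t • Ω) (Commute.neg_left (Commute.refl _)),
      neg_add_cancel, NormedSpace.exp_zero]
  rw [transpose_mul, Matrix.mul_assoc, ← Matrix.mul_assoc (NormedSpace.exp (t • Ω))ᵀ, key, Matrix.one_mul, hY]
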